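/- Suppose P∞ ∈ ℝ^{d×d} is a positive definite matrix with Φ(P∞) = P∞. Then for every n ≥ 1, 𝒢_n ≥ α₋(P∞)·S in Loewner order, where α₋(P∞) := (1 + λ₁(P∞)λ₁(S))⁻¹ and λ₁ denotes the largest eigenvalue. -/

import Mathlib

open Matrix

noncomputable section

/-- The largest eigenvalue `λ₁` of a symmetric matrix, via the Rayleigh
variational characterization. -/
def lamMax {d : ℕ} (M : Matrix (Fin d) (Fin d) ℝ) : ℝ :=
  sSup {r | ∃ x : Fin d → ℝ, x ⬝ᵥ x = 1 ∧ r = x ⬝ᵥ M.mulVec x}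

namespace S7

variable {d : ℕ}

lemma bddAbove_raySet (M : Matrix (Fin d) (Fin d) ℝ) :
    BddAbove {r | ∃ x : Fin d → ℝ, x ⬝ᵥ x = 1 ∧ r = x ⬝ᵥ M.mulVec x} := by
  refine ⟨∑ i, ∑ j, |M i j|, ?_⟩
  rintro r ⟨x, hx, rfl⟩
  have hxi : ∀ i, |x i| ≤ 1 := by
    intro i
    have h1 : x i * x i ≤ 1 := by
      rw [← hx]
      exact Finset.single_le_sum (f := fun j => x j * x j)
        (fun j _ => mul_self_nonneg _) (Finset.mem_univ i)
    nlinarith [abs_nonneg (x i), abs_mul_abs_self (x i)]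
  have hrw : x ⬝ᵥ M.mulVec x = ∑ i, ∑ j, x i * (M i j * x j) := by
    simp [dotProduct, mulVec, Finset.mul_sum]
  rw [hrw]
  refine le_trans (le_abs_self _) ?_
  refine (Finset.abs_sum_le_sum_abs _ _).trans (Finset.sum_le_sum fun i _ => ?_)
  refine (Finset.abs_sum_le_sum_abs _ _).trans (Finset.sum_le_sum fun j _ => ?_)
  rw [abs_mul, abs_mul]
  calc |x i| * (|M i j| * |x j|) ≤ 1 * (|M i j| * 1) := by
        gcongr
        · exact hxi i
        · exact hxi j
    _ = |M i j| := by ring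

lemma rayleigh_le (M : Matrix (Fin d) (Fin d) ℝ) (x : Fin d → ℝ) :
    x ⬝ᵥ M.mulVec x ≤ lamMax M * (x ⬝ᵥ x) := by
  rcases eq_or_ne x 0 with rfl | hx
  · simp
  · have hc : 0 < x ⬝ᵥ x := by
      rcases (Finset.sum_nonneg fun i _ => mul_self_nonneg (x i)).lt_or_eq with h | h
      · exact h
      · exact absurd (dotProduct_self_eq_zero.mp h.symm) hx
    set s : ℝ := Real.sqrt (x ⬝ᵥ x) with hs
    have hspos : 0 < s := Real.sqrt_pos.mpr hc
    have hss : s * s = x ⬝ᵥ x := Real.mul_self_sqrt hc.le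
    set y : Fin d → ℝ := s⁻¹ • x with hy
    have hy1 : y ⬝ᵥ y = 1 := by
      rw [hy, smul_dotProduct, dotProduct_smul, smul_eq_mul, smul_eq_mul, ← hss]
      field_simp
    have hmem : y ⬝ᵥ M.mulVec y ∈
        {r | ∃ x : Fin d → ℝ, x ⬝ᵥ x = 1 ∧ r = x ⬝ᵥ M.mulVec x} := ⟨y, hy1, rfl⟩
    have hle : y ⬝ᵥ M.mulVec y ≤ lamMax M := le_csSup (bddAbove_raySet M) hmem
    have hyx : y ⬝ᵥ M.mulVec y = s⁻¹ * (s⁻¹ * (x ⬝ᵥ M.mulVec x)) := by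
      rw [hy, mulVec_smul, smul_dotProduct, dotProduct_smul, smul_eq_mul, smul_eq_mul]
    have : x ⬝ᵥ M.mulVec x = (x ⬝ᵥ x) * (y ⬝ᵥ M.mulVec y) := by
      rw [hyx, ← hss]; field_simp
    rw [this, mul_comm (lamMax M)]
    exact mul_le_mul_of_nonneg_left hle hc.le

lemma lamMax_nonneg (hd : 1 ≤ d) {M : Matrix (Fin d) (Fin d) ℝ} (hM : M.PosSemidef) :
    0 ≤ lamMax M := by
  have : Nonempty (Fin d) := ⟨⟨0, hd⟩⟩
  set x : Fin d → ℝ := Pi.single ⟨0, hd⟩ 1 with hx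
  have hx1 : x ⬝ᵥ x = 1 := by
    simp [hx, dotProduct, Pi.single_apply]
  have h0 : 0 ≤ x ⬝ᵥ M.mulVec x := by
    have := hM.dotProduct_mulVec_nonneg x
    simpa using this
  have hle : x ⬝ᵥ M.mulVec x ≤ lamMax M :=
    le_csSup (bddAbove_raySet M) ⟨x, hx1, rfl⟩
  linarith

lemma posSemidef_smul {c : ℝ} (hc : 0 ≤ c) {M : Matrix (Fin d) (Fin d) ℝ}
    (hM : M.PosSemidef) : (c • M).PosSemidef := by
  refine PosSemidef.of_dotProduct_mulVec_nonneg ?_ (fun x => ?_)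
  · show (c • M)ᴴ = c • M
    rw [conjTranspose_smul, hM.1.eq, star_trivial]
  · have := hM.dotProduct_mulVec_nonneg x
    rw [smul_mulVec, dotProduct_smul, smul_eq_mul]
    exact mul_nonneg hc this

lemma conj_posSemidef {M : Matrix (Fin d) (Fin d) ℝ} (hM : M.PosSemidef)
    (C : Matrix (Fin d) (Fin d) ℝ) : (Cᵀ * M * C).PosSemidef := by
  have := hM.conjTranspose_mul_mul_same C
  rwa [conjTranspose_eq_transpose_of_trivial] at this

lemma posSemidef_sum {ι : Type*} (s : Finset ι) (f : ι → Matrix (Fin d) (Fin d) ℝ)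
    (h : ∀ i ∈ s, (f i).PosSemidef) : (∑ i ∈ s, f i).PosSemidef := by
  classical
  induction s using Finset.cons_induction with
  | empty => simpa using Matrix.PosSemidef.zero
  | cons a s ha ih =>
    rw [Finset.sum_cons]
    exact (h a (Finset.mem_cons_self a s)).add
      (ih fun i hi => h i (Finset.mem_cons_of_mem hi))

end S7

open scoped MatrixOrder in
set_option maxHeartbeats 2000000 in
/-- With `S := Bᵀ R₀⁻¹ B`, `Φ(P) := A (I + P S)⁻¹ P Aᵀ + R`,
`𝓔(P) := A (I + P S)⁻¹`, `𝓕(P) := S (I + P S)⁻¹` and, for a positive definite fixed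
point `P∞` of `Φ`, the Grammian `𝒢_n := Σ_{0 ≤ k < n} (𝓔(P∞)^k)ᵀ 𝓕(P∞) 𝓔(P∞)^k`:
for every `n ≥ 1`, `𝒢_n ≥ α₋(P∞)·S` in the Loewner order, where
`α₋(P∞) := (1 + λ₁(P∞)λ₁(S))⁻¹`. -/
theorem statement7 {d d₀ : ℕ} (hd : 1 ≤ d) (hd₀ : 1 ≤ d₀)
    (A : Matrix (Fin d) (Fin d) ℝ) (B : Matrix (Fin d₀) (Fin d) ℝ)
    (R : Matrix (Fin d) (Fin d) ℝ) (R₀ : Matrix (Fin d₀) (Fin d₀) ℝ)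
    (hR : R.PosDef) (hR₀ : R₀.PosDef)
    (S : Matrix (Fin d) (Fin d) ℝ) (hSdef : S = Bᵀ * R₀⁻¹ * B)
    (Pinf : Matrix (Fin d) (Fin d) ℝ) (hPinf : Pinf.PosDef)
    (hfix : A * (1 + Pinf * S)⁻¹ * Pinf * Aᵀ + R = Pinf)
    (G : ℕ → Matrix (Fin d) (Fin d) ℝ)
    (hG : ∀ n, G n = ∑ k ∈ Finset.range n,
      ((A * (1 + Pinf * S)⁻¹) ^ k)ᵀ * (S * (1 + Pinf * S)⁻¹) * (A * (1 + Pinf * S)⁻¹) ^ k)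
    (n : ℕ) (hn : 1 ≤ n) :
    (G n - (1 + lamMax Pinf * lamMax S)⁻¹ • S).PosSemidef := by
  classical
  -- S is positive semidefinite
  have hS : S.PosSemidef := by
    rw [hSdef]
    have := (hR₀.inv).posSemidef.conjTranspose_mul_mul_same B
    rwa [conjTranspose_eq_transpose_of_trivial] at this
  -- square root of S
  set L : Matrix (Fin d) (Fin d) ℝ := CFC.sqrt S with hLdef
  have hLL : L * L = S := CFC.sqrt_mul_sqrt_self S (Matrix.nonneg_iff_posSemidef.mpr hS)
  have hLsym : Lᵀ = L := by
    rw [← conjTranspose_eq_transpose_of_trivial]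
    exact (Matrix.nonneg_iff_posSemidef.mp (CFC.sqrt_nonneg S)).1
  -- constants
  set lP : ℝ := lamMax Pinf with hlP
  set lS : ℝ := lamMax S with hlS
  have hlP0 : 0 ≤ lP := S7.lamMax_nonneg hd hPinf.posSemidef
  have hlS0 : 0 ≤ lS := S7.lamMax_nonneg hd hS
  set β : ℝ := 1 + lP * lS with hβdef
  have hβ : 0 < β := by have := mul_nonneg hlP0 hlS0; simp only [hβdef]; linarith
  -- M := 1 + L P L
  set M : Matrix (Fin d) (Fin d) ℝ := 1 + L * Pinf * L with hMdef
  have hLPL : (L * Pinf * L).PosSemidef := by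
    have := S7.conj_posSemidef hPinf.posSemidef L
    rwa [hLsym] at this
  have hMpd : M.PosDef := Matrix.PosDef.one.add_posSemidef hLPL
  have hMdet : IsUnit M.det := isUnit_iff_ne_zero.mpr hMpd.det_pos.ne'
  -- invertibility of 1 + Pinf * S
  have hPdet : IsUnit Pinf.det := isUnit_iff_ne_zero.mpr hPinf.det_pos.ne'
  have hPQpd : (Pinf⁻¹ + S).PosDef := hPinf.inv.add_posSemidef hS
  have hfact : Pinf * (Pinf⁻¹ + S) = 1 + Pinf * S := by
    rw [mul_add, Matrix.mul_nonsing_inv _ hPdet]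
  have hUdet : IsUnit (1 + Pinf * S).det := by
    rw [← hfact, det_mul]
    exact hPdet.mul (isUnit_iff_ne_zero.mpr hPQpd.det_pos.ne')
  -- push-through identity
  have hML : M * L = L * (1 + Pinf * S) := by
    simp [hMdef, add_mul, mul_add, mul_assoc, hLL]
  have key : L * (1 + Pinf * S)⁻¹ = M⁻¹ * L := by
    have h1 : M⁻¹ * M = 1 := Matrix.nonsing_inv_mul _ hMdet
    have h2 : (1 + Pinf * S) * (1 + Pinf * S)⁻¹ = 1 := Matrix.mul_nonsing_inv _ hUdet
    calc L * (1 + Pinf * S)⁻¹ = M⁻¹ * (M * L) * (1 + Pinf * S)⁻¹ := by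
          rw [← mul_assoc, h1, one_mul]
      _ = M⁻¹ * (L * (1 + Pinf * S) * (1 + Pinf * S)⁻¹) := by rw [hML, mul_assoc]
      _ = M⁻¹ * L := by rw [mul_assoc, h2, mul_one]
  set F : Matrix (Fin d) (Fin d) ℝ := S * (1 + Pinf * S)⁻¹ with hFdef
  have hF : F = L * M⁻¹ * L := by
    have h1 : S * (1 + Pinf * S)⁻¹ = L * (L * (1 + Pinf * S)⁻¹) := by
      rw [← mul_assoc, hLL]
    rw [hFdef, h1, key, ← mul_assoc]
  -- β • 1 - M is PSD
  have hβM : (β • (1 : Matrix (Fin d) (Fin d) ℝ) - M).PosSemidef := by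
    refine PosSemidef.of_dotProduct_mulVec_nonneg ?_ (fun x => ?_)
    · show (β • (1 : Matrix (Fin d) (Fin d) ℝ) - M)ᴴ = _
      rw [conjTranspose_sub, conjTranspose_smul, hMpd.1.eq, conjTranspose_one, star_trivial]
    · have hx : star x = x := star_trivial x
      rw [hx]
      have hexp : x ⬝ᵥ (β • (1 : Matrix (Fin d) (Fin d) ℝ) - M) *ᵥ x
          = β * (x ⬝ᵥ x) - (x ⬝ᵥ x) - x ⬝ᵥ (L * Pinf * L) *ᵥ x := by
        rw [hMdef, sub_mulVec, add_mulVec, smul_mulVec, one_mulVec,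
          dotProduct_sub, dotProduct_add, dotProduct_smul, smul_eq_mul]
        ring
      rw [hexp]
      have hswap : ∀ y : Fin d → ℝ, x ⬝ᵥ L *ᵥ y = (L *ᵥ x) ⬝ᵥ y := by
        intro y
        rw [dotProduct_mulVec]
        congr 1
        nth_rewrite 1 [← hLsym]
        rw [vecMul_transpose]
      have e1 : x ⬝ᵥ (L * Pinf * L) *ᵥ x = (L *ᵥ x) ⬝ᵥ Pinf *ᵥ (L *ᵥ x) := by
        rw [← mulVec_mulVec, ← mulVec_mulVec, hswap]
      have e2 : (L *ᵥ x) ⬝ᵥ (L *ᵥ x) = x ⬝ᵥ S *ᵥ x := by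
        rw [← hswap, mulVec_mulVec, hLL]
      have r1 : (L *ᵥ x) ⬝ᵥ Pinf *ᵥ (L *ᵥ x) ≤ lP * ((L *ᵥ x) ⬝ᵥ (L *ᵥ x)) :=
        S7.rayleigh_le Pinf (L *ᵥ x)
      have r2 : x ⬝ᵥ S *ᵥ x ≤ lS * (x ⬝ᵥ x) := S7.rayleigh_le S x
      have hβx : β * (x ⬝ᵥ x) - (x ⬝ᵥ x) = lP * lS * (x ⬝ᵥ x) := by
        rw [hβdef]; ring
      rw [hβx, e1]
      have : (L *ᵥ x) ⬝ᵥ Pinf *ᵥ (L *ᵥ x) ≤ lP * (lS * (x ⬝ᵥ x)) := by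
        refine r1.trans ?_
        rw [e2]
        exact mul_le_mul_of_nonneg_left r2 hlP0
      nlinarith
  -- sqrt of M
  set K : Matrix (Fin d) (Fin d) ℝ := CFC.sqrt M with hKdeff
  have hKK : K * K = M := CFC.sqrt_mul_sqrt_self M (Matrix.nonneg_iff_posSemidef.mpr hMpd.posSemidef)
  have hKsym : Kᵀ = K := by
    rw [← conjTranspose_eq_transpose_of_trivial]
    exact (Matrix.nonneg_iff_posSemidef.mp (CFC.sqrt_nonneg M)).1
  have hKdet : IsUnit K.det := by
    rw [isUnit_iff_ne_zero]
    intro h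
    have : M.det = 0 := by rw [← hKK, det_mul, h, mul_zero]
    exact hMpd.det_pos.ne' this
  have hKinvsym : (K⁻¹)ᵀ = K⁻¹ := by rw [Matrix.transpose_nonsing_inv, hKsym]
  have hKiK : K⁻¹ * K = 1 := Matrix.nonsing_inv_mul _ hKdet
  have hKKi : K * K⁻¹ = 1 := Matrix.mul_nonsing_inv _ hKdet
  -- β • M⁻¹ - 1 is PSD
  have hconj : (K⁻¹ * (β • (1 : Matrix (Fin d) (Fin d) ℝ) - M) * K⁻¹).PosSemidef := by
    have := S7.conj_posSemidef hβM (K⁻¹)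
    rwa [hKinvsym] at this
  have hrw2 : K⁻¹ * (β • (1 : Matrix (Fin d) (Fin d) ℝ) - M) * K⁻¹
      = β • M⁻¹ - 1 := by
    have hMinv : M⁻¹ = K⁻¹ * K⁻¹ := by rw [← Matrix.mul_inv_rev, hKK]
    rw [mul_sub, sub_mul, Matrix.mul_smul, mul_one, Matrix.smul_mul, hMinv, ← hKK]
    congr 1
    rw [← mul_assoc, mul_assoc (K⁻¹) K K, ← mul_assoc (K⁻¹), hKiK, one_mul, hKKi]
  have hβMinv : (β • M⁻¹ - 1).PosSemidef := by rwa [hrw2] at hconj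
  have hcore : (M⁻¹ - β⁻¹ • (1 : Matrix (Fin d) (Fin d) ℝ)).PosSemidef := by
    have h := S7.posSemidef_smul (c := β⁻¹) (by positivity) hβMinv
    have : β⁻¹ • (β • M⁻¹ - (1 : Matrix (Fin d) (Fin d) ℝ))
        = M⁻¹ - β⁻¹ • (1 : Matrix (Fin d) (Fin d) ℝ) := by
      rw [smul_sub, smul_smul, inv_mul_cancel₀ hβ.ne', one_smul]
    rwa [this] at h
  -- F - β⁻¹ • S is PSD
  have hFS : (F - β⁻¹ • S).PosSemidef := by
    have h := S7.conj_posSemidef hcore L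
    rw [hLsym] at h
    have : L * (M⁻¹ - β⁻¹ • (1 : Matrix (Fin d) (Fin d) ℝ)) * L = F - β⁻¹ • S := by
      rw [mul_sub, sub_mul, hF, Matrix.mul_smul, mul_one, Matrix.smul_mul, hLL]
    rwa [this] at h
  have hFpsd : F.PosSemidef := by
    have := hFS.add (S7.posSemidef_smul (c := β⁻¹) (by positivity) hS)
    rwa [sub_add_cancel] at this
  -- split the sum
  set E : Matrix (Fin d) (Fin d) ℝ := A * (1 + Pinf * S)⁻¹ with hEdef
  have hterm : ∀ k, ((E ^ k)ᵀ * F * E ^ k).PosSemidef := fun k =>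
    S7.conj_posSemidef hFpsd (E ^ k)
  have hsplit : G n = F + ∑ k ∈ Finset.Ico 1 n, (E ^ k)ᵀ * F * E ^ k := by
    rw [hG n, Finset.range_eq_Ico, Finset.sum_eq_sum_Ico_succ_bot hn]
    congr 1
    simp [hEdef, hFdef]
  have hgoal : G n - β⁻¹ • S
      = (F - β⁻¹ • S) + ∑ k ∈ Finset.Ico 1 n, (E ^ k)ᵀ * F * E ^ k := by
    rw [hsplit]; abel
  show (G n - β⁻¹ • S).PosSemidef
  rw [hgoal]
  exact hFS.add (S7.posSemidef_sum _ _ fun k _ => hterm k)
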